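/- For every 0 < ε < π/2 there exists h = h(ε) ∈ (0,1) such that for every integer n ≥ 4 and every (t1, t2) ∈ ℝ² with M(t1) + n·M(t2) ≥ ε (where M(x) = min_{k∈ℤ} |x − kπ| is the distance to the nearest multiple of π), one has |∏_{j=1}^n cos(t1 + j t2)| ≤ (1 − h)^n. -/

import Mathlib

set_option maxHeartbeats 1000000

open Finset Real

theorem prod_cos_exponentially_small
    (M : ℝ → ℝ) (hM : ∀ x, M x = ⨅ k : ℤ, |x - (k : ℝ) * Real.pi|) :
    ∀ ε : ℝ, 0 < ε → ε < Real.pi / 2 →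
      ∃ h : ℝ, h ∈ Set.Ioo (0 : ℝ) 1 ∧
        ∀ (n : ℕ), 4 ≤ n → ∀ t1 t2 : ℝ, ε ≤ M t1 + (n : ℝ) * M t2 →
          |∏ j ∈ Finset.Icc 1 n, Real.cos (t1 + (j : ℝ) * t2)| ≤ (1 - h) ^ n := by
  have hπ := Real.pi_pos
  have hbdd : ∀ x : ℝ, BddBelow (Set.range fun k : ℤ => |x - (k:ℝ) * π|) := by
    intro x; exact ⟨0, by rintro y ⟨k, rfl⟩; positivity⟩
  have hMle : ∀ (x : ℝ) (k : ℤ), M x ≤ |x - (k:ℝ) * π| := by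
    intro x k; rw [hM]; exact ciInf_le (hbdd x) k
  have hMge : ∀ (x c : ℝ), (∀ k : ℤ, c ≤ |x - (k:ℝ) * π|) → c ≤ M x := by
    intro x c hc; rw [hM]; exact le_ciInf hc
  have hM0 : ∀ x, 0 ≤ M x := fun x => hMge x 0 fun k => abs_nonneg _
  have hMeq : ∀ x, M x = |x - (round (x/π) : ℤ) * π| := by
    intro x
    refine le_antisymm (hMle x _) (hMge x _ fun k => ?_)
    have hx : x - (round (x/π) : ℤ) * π = (x/π - round (x/π)) * π := by field_simp
    have hxk : x - (k:ℝ) * π = (x/π - k) * π := by field_simp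
    rw [hx, hxk, abs_mul, abs_mul, abs_of_pos hπ]
    apply mul_le_mul_of_nonneg_right _ hπ.le
    set u := x / π with hu
    rcases eq_or_ne k (round u) with rfl | hk
    · exact le_rfl
    · have h1 : (1:ℝ) ≤ |((round u - k : ℤ) : ℝ)| := by
        exact_mod_cast Int.one_le_abs (sub_ne_zero.mpr (Ne.symm hk))
      have h2 : |u - (round u : ℝ)| ≤ 1/2 := abs_sub_round u
      have h3 : |((round u : ℝ)) - k| ≤ |(round u : ℝ) - u| + |u - k| := abs_sub_le _ _ _
      rw [abs_sub_comm ((round u : ℝ)) u] at h3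
      push_cast at h1
      linarith
  have hMhalf : ∀ x, M x ≤ π / 2 := by
    intro x
    rw [hMeq x]
    have h2 : |x/π - (round (x/π) : ℝ)| ≤ 1/2 := abs_sub_round _
    have hx : x - (round (x/π) : ℤ) * π = (x/π - round (x/π)) * π := by field_simp
    rw [hx, abs_mul, abs_of_pos hπ]
    push_cast at h2 ⊢
    nlinarith
  have habs_cos : ∀ x, |Real.cos x| = Real.cos (M x) := by
    intro x
    set s := x - (round (x/π) : ℤ) * π with hs
    have hxeq : x = s + (round (x/π) : ℤ) * π := by rw [hs]; ring
    have h1 : Real.cos x = (-1:ℝ) ^ (round (x/π)) * Real.cos s := by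
      conv_lhs => rw [hxeq]
      exact Real.cos_add_int_mul_pi s _
    have hs2 : |s| ≤ π/2 := by rw [← hMeq x] at *; exact hMhalf x
    have hcs : 0 ≤ Real.cos s := Real.cos_nonneg_of_mem_Icc
      ⟨by cases abs_le.mp hs2; linarith, (le_abs_self s).trans hs2⟩
    rw [hMeq x, ← hs, h1, abs_mul]
    have hone : |(-1:ℝ) ^ (round (x/π))| = 1 := by
      rcases Int.even_or_odd (round (x/π)) with he | ho
      · rw [Even.neg_one_zpow he]; norm_num
      · rw [Odd.neg_one_zpow ho]; norm_num
    rw [hone, one_mul, abs_of_nonneg hcs, Real.cos_abs]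
  -- lower bound for shifted arguments
  have hMlow : ∀ (t1 t2 : ℝ) (j : ℕ), M t1 - (j:ℝ) * M t2 ≤ M (t1 + (j:ℝ) * t2) := by
    intro t1 t2 j
    apply hMge
    intro k
    set r2 := round (t2/π) with hr2
    set s2 := t2 - (r2:ℤ) * π with hs2
    have habs : |s2| = M t2 := (hMeq t2).symm
    have hkey : t1 - ((k - j * r2 : ℤ):ℝ) * π = (t1 + (j:ℝ) * t2 - (k:ℝ)*π) - (j:ℝ) * s2 := by
      rw [hs2]; push_cast; ring
    have h1 : M t1 ≤ |t1 - ((k - j * r2 : ℤ):ℝ) * π| := hMle t1 _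
    rw [hkey] at h1
    have h2 : |(t1 + (j:ℝ) * t2 - (k:ℝ)*π) - (j:ℝ) * s2| ≤ |t1 + (j:ℝ) * t2 - (k:ℝ)*π| + (j:ℝ) * M t2 := by
      refine (abs_sub _ _).trans ?_
      rw [abs_mul, Nat.abs_cast, habs]
    linarith
  -- lower bound for M (k * t2) when k * M t2 ∈ [δ, π - δ]
  have hMgap : ∀ (t2 : ℝ) (k : ℕ) (δ : ℝ), 0 < δ → δ ≤ (k:ℝ) * M t2 → (k:ℝ) * M t2 ≤ π - δ →
      δ ≤ M ((k:ℝ) * t2) := by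
    intro t2 k δ hδ hlo hhi
    apply hMge
    intro i
    set r2 := round (t2/π) with hr2
    set s2 := t2 - (r2:ℤ) * π with hs2
    have habs : |s2| = M t2 := (hMeq t2).symm
    have hkey : (k:ℝ) * t2 - (i:ℝ) * π = (k:ℝ) * s2 - ((i - k * r2 : ℤ):ℝ) * π := by
      rw [hs2]; push_cast; ring
    rw [hkey]
    set a := (k:ℝ) * s2 with ha
    have haabs : |a| = (k:ℝ) * M t2 := by rw [ha, abs_mul, Nat.abs_cast, habs]
    set m : ℤ := i - k * r2 with hm
    -- now: δ ≤ |a|, |a| ≤ π - δ, show δ ≤ |a - m π|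
    rcases le_or_gt 0 a with hA | hA
    · rw [abs_of_nonneg hA] at haabs
      rcases le_or_gt m 0 with hm0 | hm0
      · have : (m:ℝ) * π ≤ 0 := mul_nonpos_of_nonpos_of_nonneg (by exact_mod_cast hm0) hπ.le
        have : δ ≤ a - (m:ℝ) * π := by linarith [haabs ▸ hlo]
        exact this.trans (le_abs_self _)
      · have hm1 : (1:ℝ) ≤ (m:ℝ) := by exact_mod_cast hm0
        have : δ ≤ (m:ℝ) * π - a := by nlinarith [haabs ▸ hhi]
        calc δ ≤ (m:ℝ)*π - a := this
          _ ≤ |(m:ℝ)*π - a| := le_abs_self _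
          _ = |a - (m:ℝ)*π| := abs_sub_comm _ _
    · rw [abs_of_neg hA] at haabs
      rcases le_or_gt 0 m with hm0 | hm0
      · have : 0 ≤ (m:ℝ) * π := mul_nonneg (by exact_mod_cast hm0) hπ.le
        have : δ ≤ (m:ℝ) * π - a := by linarith [haabs ▸ hlo]
        calc δ ≤ (m:ℝ)*π - a := this
          _ ≤ |(m:ℝ)*π - a| := le_abs_self _
          _ = |a - (m:ℝ)*π| := abs_sub_comm _ _
      · have hm1 : (m:ℝ) ≤ -1 := by
          have : m ≤ -1 := by omega
          exact_mod_cast this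
        have : δ ≤ a - (m:ℝ) * π := by nlinarith [haabs ▸ hhi]
        exact this.trans (le_abs_self _)
  -- pair bound
  have hpair : ∀ a b : ℝ, |Real.cos a * Real.cos b| ≤ (1 + Real.cos (M (a - b))) / 2 := by
    intro a b
    have hid : Real.cos a * Real.cos b = (Real.cos (a+b) + Real.cos (a-b)) / 2 := by
      rw [Real.cos_add, Real.cos_sub]; ring
    rw [hid, abs_div, abs_two]
    have h1 : |Real.cos (a+b) + Real.cos (a-b)| ≤ 1 + Real.cos (M (a-b)) := by
      refine (abs_add_le _ _).trans ?_
      rw [habs_cos (a-b)]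
      linarith [Real.abs_cos_le_one (a+b)]
    linarith
  -- main
  intro ε hε hεπ
  set δ : ℝ := ε / 16 with hδdef
  have hδ : 0 < δ := by positivity
  have hδπ : δ < π / 2 := by rw [hδdef]; linarith
  have hcosδ1 : Real.cos δ < 1 := by
    have := Real.cos_lt_cos_of_nonneg_of_le_pi (le_refl 0) (by linarith) hδ
    rwa [Real.cos_zero] at this
  have hcosδ0 : 0 < Real.cos δ := Real.cos_pos_of_mem_Ioo ⟨by linarith, hδπ⟩
  set c : ℝ := (1 + Real.cos δ) / 2 with hcdef
  have hc0 : 0 < c := by rw [hcdef]; linarith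
  have hc1 : c < 1 := by rw [hcdef]; linarith
  set r : ℝ := c ^ ((1:ℝ)/4) with hrdef
  have hr0 : 0 < r := Real.rpow_pos_of_pos hc0 _
  have hr1 : r < 1 := Real.rpow_lt_one hc0.le hc1 (by norm_num)
  have hcos2_1 : Real.cos (ε/2) < 1 := by
    have := Real.cos_lt_cos_of_nonneg_of_le_pi (le_refl 0) (by linarith) (by linarith : (0:ℝ) < ε/2)
    rwa [Real.cos_zero] at this
  have hcos2_0 : 0 < Real.cos (ε/2) := Real.cos_pos_of_mem_Ioo ⟨by linarith, by linarith⟩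
  refine ⟨min (1 - Real.cos (ε/2)) (1 - r), ⟨lt_min (by linarith) (by linarith),
    (min_le_left _ _).trans_lt (by linarith)⟩, ?_⟩
  intro n hn t1 t2 hεM
  set H := min (1 - Real.cos (ε/2)) (1 - r) with hH
  have h1H_cos : Real.cos (ε/2) ≤ 1 - H := by
    have := min_le_left (1 - Real.cos (ε/2)) (1 - r); rw [← hH] at this; linarith
  have h1H_r : r ≤ 1 - H := by
    have := min_le_right (1 - Real.cos (ε/2)) (1 - r); rw [← hH] at this; linarith
  have h1H0 : 0 ≤ 1 - H := le_trans hr0.le h1H_r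
  set f : ℕ → ℝ := fun j => |Real.cos (t1 + (j:ℝ) * t2)| with hf
  have hf0 : ∀ j, 0 ≤ f j := fun j => abs_nonneg _
  have hf1 : ∀ j, f j ≤ 1 := fun j => Real.abs_cos_le_one _
  have hfeq : ∀ j, f j = Real.cos (M (t1 + (j:ℝ) * t2)) := fun j => habs_cos _
  rw [Finset.abs_prod]
  have hcard : (Finset.Icc 1 n).card = n := by rw [Nat.card_Icc]; omega
  rcases le_or_gt (ε/4) ((n:ℝ) * M t2) with hB | hA
  · -- Case B : n * M t2 ≥ ε / 4
    have hn0 : (0:ℝ) < n := by positivity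
    have hθ : 0 < M t2 := by
      by_contra hcon
      push_neg at hcon
      nlinarith
    set k : ℕ := ⌈δ / M t2⌉₊ with hk
    have hk1 : 1 ≤ k := Nat.one_le_ceil_iff.mpr (div_pos hδ hθ)
    have hkθ : δ ≤ (k:ℝ) * M t2 := by
      have := Nat.le_ceil (δ / M t2)
      rw [div_le_iff₀ hθ] at this
      rw [← hk] at this
      linarith [this]
    have hkub : (k:ℝ) < δ / M t2 + 1 := by
      rw [hk]; exact Nat.ceil_lt_add_one (le_of_lt (div_pos hδ hθ))
    have hdivn : δ / M t2 ≤ (n:ℝ) / 4 := by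
      rw [div_le_div_iff₀ hθ (by norm_num : (0:ℝ) < 4)]
      rw [hδdef]; nlinarith
    have h2kn : 2 * k ≤ n := by
      have hn4 : (4:ℝ) ≤ (n:ℝ) := by exact_mod_cast hn
      have : (k:ℝ) < (n:ℝ)/4 + 1 := lt_of_lt_of_le hkub (by linarith)
      have h2 : (2*k:ℝ) < (n:ℝ) := by push_cast; linarith
      exact_mod_cast h2.le
    have hkn : k ≤ n := by omega
    have hkhi : (k:ℝ) * M t2 ≤ π - δ := by
      have h1 : (k:ℝ) * M t2 < δ + M t2 := by
        have h := mul_lt_mul_of_pos_right hkub hθ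
        rw [add_mul, div_mul_cancel₀ _ hθ.ne', one_mul] at h
        exact h
      have h2 : M t2 ≤ π/2 := hMhalf t2
      have : δ + π/2 ≤ π - δ := by rw [hδdef]; linarith
      linarith
    have hMk : δ ≤ M ((k:ℝ) * t2) := hMgap t2 k δ hδ hkθ hkhi
    have hcosMk : Real.cos (M ((k:ℝ) * t2)) ≤ Real.cos δ :=
      Real.cos_le_cos_of_nonneg_of_le_pi hδ.le (le_trans (hMhalf _) (by linarith)) hMk
    -- pairwise product bound
    have hpairk : ∀ j : ℕ, f j * f (j + k) ≤ c := by
      intro j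
      have heq : f j * f (j + k) = |Real.cos (t1 + ((j+k:ℕ):ℝ)*t2) * Real.cos (t1 + (j:ℝ)*t2)| := by
        rw [hf]; rw [abs_mul]; ring
      have hdiff : (t1 + ((j+k:ℕ):ℝ)*t2) - (t1 + (j:ℝ)*t2) = (k:ℝ) * t2 := by push_cast; ring
      rw [heq]
      refine (hpair _ _).trans ?_
      rw [hdiff, hcdef]
      linarith
    -- subproducts
    set P := ∏ j ∈ Finset.Icc 1 n, f j with hP
    have hP0 : 0 ≤ P := Finset.prod_nonneg fun j _ => hf0 j
    have hsub : ∀ s : Finset ℕ, s ⊆ Finset.Icc 1 n → P ≤ ∏ j ∈ s, f j := by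
      intro s hs
      have := Finset.prod_sdiff hs (f := f)
      rw [hP, ← this]
      have hle1 : ∏ j ∈ Finset.Icc 1 n \ s, f j ≤ 1 :=
        Finset.prod_le_one (fun j _ => hf0 j) (fun j _ => hf1 j)
      have hs0 : 0 ≤ ∏ j ∈ s, f j := Finset.prod_nonneg fun j _ => hf0 j
      nlinarith [Finset.prod_nonneg (fun j (_ : j ∈ Finset.Icc 1 n \ s) => hf0 j)]
    have hPA : P ≤ ∏ j ∈ Finset.Icc 1 (n - k), f j :=
      hsub _ (Finset.Icc_subset_Icc_right (Nat.sub_le n k))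
    have hPB : P ≤ ∏ j ∈ Finset.Icc (1 + k) (n - k + k), f j := by
      apply hsub
      rw [Nat.sub_add_cancel hkn]
      exact Finset.Icc_subset_Icc_left (by omega)
    have hshift : ∏ j ∈ Finset.Icc (1 + k) (n - k + k), f j
        = ∏ j ∈ Finset.Icc 1 (n - k), f (j + k) := by
      rw [← Finset.map_add_right_Icc, Finset.prod_map]
      rfl
    have hP2 : P ^ 2 ≤ c ^ (n - k) := by
      have hAB : P ^ 2 ≤ (∏ j ∈ Finset.Icc 1 (n - k), f j) * (∏ j ∈ Finset.Icc 1 (n - k), f (j + k)) := by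
        rw [pow_two, ← hshift]
        exact mul_le_mul hPA hPB hP0 (Finset.prod_nonneg fun j _ => hf0 j)
      rw [← Finset.prod_mul_distrib] at hAB
      refine hAB.trans ?_
      calc ∏ j ∈ Finset.Icc 1 (n - k), f j * f (j + k)
          ≤ ∏ j ∈ Finset.Icc 1 (n - k), c :=
            Finset.prod_le_prod (fun j _ => mul_nonneg (hf0 j) (hf0 _)) (fun j _ => hpairk j)
        _ = c ^ (n - k) := by rw [Finset.prod_const, Nat.card_Icc]; norm_num
    have hrn : P ≤ r ^ n := by
      have hkey : c ^ (n - k) ≤ (r ^ n) ^ 2 := by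
        have e1 : (r ^ n) ^ 2 = c ^ (((n:ℝ)) / 2) := by
          rw [hrdef, ← Real.rpow_natCast (c ^ ((1:ℝ)/4)) n, ← Real.rpow_mul hc0.le,
            ← Real.rpow_natCast (c ^ ((1:ℝ)/4 * (n:ℝ))) 2, ← Real.rpow_mul hc0.le]
          ring_nf
        have e2 : c ^ (n - k) = c ^ (((n - k : ℕ)):ℝ) := by
          rw [Real.rpow_natCast]
        rw [e1, e2]
        apply Real.rpow_le_rpow_of_exponent_ge hc0 hc1.le
        have : ((n - k : ℕ):ℝ) = (n:ℝ) - (k:ℝ) := by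
          rw [Nat.cast_sub hkn]
        rw [this]
        have h2k : (2*k:ℝ) ≤ (n:ℝ) := by exact_mod_cast h2kn
        push_cast at h2k
        linarith
      have := hP2.trans hkey
      have hsq := Real.sqrt_le_sqrt this
      rwa [Real.sqrt_sq hP0, Real.sqrt_sq (pow_nonneg hr0.le n)] at hsq
    refine hrn.trans ?_
    exact pow_le_pow_left₀ hr0.le h1H_r n
  · -- Case A : n * M t2 < ε / 4, so M t1 ≥ 3ε/4 and each factor small
    have hθ0 : 0 ≤ M t2 := hM0 t2
    have hMt1 : 3*ε/4 ≤ M t1 := by linarith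
    have hfle : ∀ j ∈ Finset.Icc 1 n, f j ≤ Real.cos (ε/2) := by
      intro j hj
      have hjn : (j:ℝ) ≤ (n:ℝ) := by
        exact_mod_cast (Finset.mem_Icc.mp hj).2
      have hjM : (j:ℝ) * M t2 ≤ (n:ℝ) * M t2 := by nlinarith
      have hlow : ε/2 ≤ M (t1 + (j:ℝ) * t2) := by
        have := hMlow t1 t2 j
        linarith
      rw [hfeq j]
      exact Real.cos_le_cos_of_nonneg_of_le_pi (by linarith)
        (le_trans (hMhalf _) (by linarith)) hlow
    calc ∏ j ∈ Finset.Icc 1 n, f j ≤ ∏ j ∈ Finset.Icc 1 n, Real.cos (ε/2) :=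
          Finset.prod_le_prod (fun j _ => hf0 j) hfle
      _ = Real.cos (ε/2) ^ n := by rw [Finset.prod_const, hcard]
      _ ≤ (1 - H) ^ n := pow_le_pow_left₀ hcos2_0.le h1H_cos n
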